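/- Let [α₁,α₂]⊆[a,b], [β₁,β₂]⊆[c,d] with α₁<α₂, β₁<β₂, w nonnegative integrable with m(α₁,α₂)=∫_{α₁}^{α₂}w and m(β₁,β₂)=∫_{β₁}^{β₂}w, and let f:[a,b]×[c,d]→ℝ be C². Define P(x,t)=∫_{α₁}^t w for α₁≤t<x, P(x,t)=∫_{α₂}^t w for x≤t≤α₂, and Q(y,s) analogously on [β₁,β₂]. Then for (x,y)∈[α₁,α₂]×[β₁,β₂]: f(x,y) = (1/m(α₁,α₂))∫_{α₁}^{α₂}w(t)f(t,y)dt + (1/m(β₁,β₂))∫_{β₁}^{β₂}w(s)f(x,s)ds - (1/(m(α₁,α₂)m(β₁,β₂)))[∫_{α₁}^{α₂}∫_{β₁}^{β₂}w(t)w(s)f(t,s)ds dt - ∫_{α₁}^{α₂}∫_{β₁}^{β₂}P(x,t)Q(y,s)·∂²f/∂t∂s(t,s)ds dt]. -/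

import Mathlib

open Set MeasureTheory intervalIntegral Metric Filter

section Aux

/-- Two intervals agree a.e. -/
lemma interAE {α₁ α₂ p q : ℝ} (hp : α₁ ≤ p) (hq : q ≤ α₂) :
    (Ioc α₁ α₂ ∩ Ico p q : Set ℝ) =ᵐ[(volume : Measure ℝ)] (Ioc p q : Set ℝ) := by
  rw [MeasureTheory.ae_eq_set]
  constructor
  · refine measure_mono_null (fun t ht => ?_) (measure_singleton p)
    obtain ⟨⟨hs, hico⟩, hn⟩ := ht
    obtain ⟨hpt, htq⟩ := hico
    have hne : ¬(p < t ∧ t ≤ q) := by simpa [mem_Ioc] using hn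
    have : t = p := le_antisymm (by
      by_contra hcon
      exact hne ⟨not_le.mp hcon, le_of_lt htq⟩) hpt
    simp [this]
  · refine measure_mono_null (fun t ht => ?_) (measure_singleton q)
    obtain ⟨⟨hpt, htq⟩, hn⟩ := ht
    have hts : t ∈ Ioc α₁ α₂ := ⟨lt_of_le_of_lt hp hpt, le_trans htq hq⟩
    have hni : t ∉ Ico p q := fun h => hn ⟨hts, h⟩
    have : t = q := by
      by_contra hcon
      exact hni ⟨le_of_lt hpt, lt_of_le_of_ne htq hcon⟩
    simp [this]

/-- Weighted Montgomery identity, measurable-weight version. -/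
lemma montgomery_aux {α₁ α₂ M : ℝ} (hα : α₁ ≤ α₂) {w g g' : ℝ → ℝ}
    (hwm : StronglyMeasurable w)
    (hw : IntervalIntegrable w volume α₁ α₂)
    (hgc : ContinuousOn g (Icc α₁ α₂))
    (hg : ∀ t ∈ Ioo α₁ α₂, HasDerivAt g (g' t) t)
    (hg'c : Continuous g')
    (hg'b : ∀ t, ‖g' t‖ ≤ M)
    {x : ℝ} (hx : x ∈ Icc α₁ α₂) :
    ∫ t in α₁..α₂, (if t < x then ∫ u in α₁..t, w u else ∫ u in α₂..t, w u) * g' t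
      = (∫ u in α₁..α₂, w u) * g x - ∫ t in α₁..α₂, w t * g t := by
  have hM0 : 0 ≤ M := le_trans (norm_nonneg _) (hg'b 0)
  have hwI : IntegrableOn w (Ioc α₁ α₂) volume :=
    (intervalIntegrable_iff_integrableOn_Ioc_of_le hα).mp hw
  haveI : IsFiniteMeasure (volume.restrict (Ioc α₁ α₂)) := by
    constructor
    rw [Measure.restrict_apply_univ]
    exact measure_Ioc_lt_top
  set c : ℝ → ℝ → ℝ := fun t u =>
    if t < x then (if u ≤ t then 1 else 0) else (if t < u then -1 else 0) with hc
  have hcb : ∀ t u, |c t u| ≤ 1 := by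
    intro t u; rw [hc]; dsimp only; split_ifs <;> norm_num
  have hcm : Measurable (fun p : ℝ × ℝ => c p.1 p.2) := by
    rw [hc]
    apply Measurable.ite (measurableSet_lt measurable_fst measurable_const)
    · exact Measurable.ite (measurableSet_le measurable_snd measurable_fst)
        measurable_const measurable_const
    · exact Measurable.ite (measurableSet_lt measurable_fst measurable_snd)
        measurable_const measurable_const
  -- the kernel recovers P
  have keyA : ∀ t ∈ Ioc α₁ α₂,
      (∫ u in Ioc α₁ α₂, c t u * w u)
        = (if t < x then ∫ u in α₁..t, w u else ∫ u in α₂..t, w u) := by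
    intro t ht
    by_cases h : t < x
    · rw [if_pos h]
      have heq : (fun u => c t u * w u) = (Iic t).indicator w := by
        funext u
        rw [hc]; by_cases hu : u ≤ t <;> simp [Set.indicator_apply, hu, h]
      rw [heq, setIntegral_indicator measurableSet_Iic]
      have hset : Ioc α₁ α₂ ∩ Iic t = Ioc α₁ t := by
        ext u
        simp only [mem_inter_iff, mem_Ioc, mem_Iic]
        constructor
        · rintro ⟨⟨h1, _⟩, h3⟩; exact ⟨h1, h3⟩
        · rintro ⟨h1, h3⟩; exact ⟨⟨h1, le_trans h3 ht.2⟩, h3⟩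
      rw [hset, intervalIntegral.integral_of_le ht.1.le]
    · rw [if_neg h]
      push_neg at h
      have heq : (fun u => c t u * w u) = fun u => -((Ioi t).indicator w u) := by
        funext u
        rw [hc]; by_cases hu : t < u <;>
          simp [Set.indicator_apply, hu, not_lt.mpr h, not_lt]
      rw [heq, MeasureTheory.integral_neg, setIntegral_indicator measurableSet_Ioi]
      have hset : Ioc α₁ α₂ ∩ Ioi t = Ioc t α₂ := by
        ext u
        simp only [mem_inter_iff, mem_Ioc, mem_Ioi]
        constructor
        · rintro ⟨⟨_, h2⟩, h3⟩; exact ⟨h3, h2⟩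
        · rintro ⟨h1, h3⟩; exact ⟨⟨lt_of_lt_of_le ht.1 h1.le, h3⟩, h1⟩
      rw [hset, ← intervalIntegral.integral_of_le ht.2]
      rw [← intervalIntegral.integral_symm]
  -- FTC
  have ftc : ∀ p q : ℝ, p ∈ Icc α₁ α₂ → q ∈ Icc α₁ α₂ → p ≤ q →
      ∫ t in p..q, g' t = g q - g p := by
    intro p q hp hq hpq
    apply intervalIntegral.integral_eq_sub_of_hasDeriv_right_of_le hpq
      (hgc.mono (Icc_subset_Icc hp.1 hq.2))
    · intro t ht
      exact (hg t ⟨lt_of_le_of_lt hp.1 ht.1, lt_of_lt_of_le ht.2 hq.2⟩).hasDerivWithinAt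
    · exact hg'c.intervalIntegrable _ _
  -- the kernel integrates g' to a difference
  have keyB : ∀ u ∈ Ioc α₁ α₂,
      (∫ t in Ioc α₁ α₂, c t u * g' t) = g x - g u := by
    intro u hu
    by_cases h : u ≤ x
    · have heq : (fun t => c t u * g' t) = (Ico u x).indicator g' := by
        funext t
        rw [hc]; dsimp only
        by_cases h1 : t < x
        · by_cases h2 : u ≤ t
          · simp [Set.indicator_apply, mem_Ico, h1, h2]
          · simp [Set.indicator_apply, mem_Ico, h1, h2]
        · have h3 : ¬ t < u := fun hc' => h1 (lt_of_lt_of_le hc' h)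
          simp [Set.indicator_apply, mem_Ico, h1, h3]
      rw [heq, setIntegral_indicator measurableSet_Ico,
        setIntegral_congr_set (interAE hu.1.le hx.2),
        ← intervalIntegral.integral_of_le h]
      exact ftc u x ⟨hu.1.le, hu.2⟩ hx h
    · push_neg at h
      have heq : (fun t => c t u * g' t) = fun t => -((Ico x u).indicator g' t) := by
        funext t
        rw [hc]; dsimp only
        by_cases h1 : t < x
        · have h2 : ¬ u ≤ t := fun hc' => absurd (lt_trans h1 h) (not_lt.mpr hc')
          simp [Set.indicator_apply, mem_Ico, not_le.mpr h1, h2]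
        · by_cases h2 : t < u
          · simp [Set.indicator_apply, mem_Ico, h1, h2, not_lt.mp h1]
          · simp [Set.indicator_apply, mem_Ico, h1, h2]
      rw [heq, MeasureTheory.integral_neg, setIntegral_indicator measurableSet_Ico,
        setIntegral_congr_set (interAE hx.1 hu.2),
        ← intervalIntegral.integral_of_le h.le,
        ftc x u hx ⟨hu.1.le, hu.2⟩ h.le]
      ring
  -- integrability on the product
  have hgm : AEStronglyMeasurable (fun p : ℝ × ℝ => c p.1 p.2 * w p.2 * g' p.1)
      ((volume.restrict (Ioc α₁ α₂)).prod (volume.restrict (Ioc α₁ α₂))) := by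
    apply AEStronglyMeasurable.mul
    · exact (hcm.mul (hwm.measurable.comp measurable_snd)).aestronglyMeasurable
    · exact (hg'c.comp continuous_fst).aestronglyMeasurable
  have hbint : Integrable (fun p : ℝ × ℝ => (1 : ℝ) * (|w p.2| * M))
      ((volume.restrict (Ioc α₁ α₂)).prod (volume.restrict (Ioc α₁ α₂))) :=
    (integrable_const (1:ℝ)).mul_prod (hwI.abs.mul_const M)
  have hint : Integrable (fun p : ℝ × ℝ => c p.1 p.2 * w p.2 * g' p.1)
      ((volume.restrict (Ioc α₁ α₂)).prod (volume.restrict (Ioc α₁ α₂))) := by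
    refine hbint.mono' hgm (Eventually.of_forall fun p => ?_)
    have h1 := hcb p.1 p.2
    have h2 := hg'b p.1
    rw [Real.norm_eq_abs] at h2 ⊢
    calc |c p.1 p.2 * w p.2 * g' p.1| = |c p.1 p.2| * |w p.2| * |g' p.1| := by
          rw [abs_mul, abs_mul]
      _ ≤ 1 * |w p.2| * M := by
          apply mul_le_mul (mul_le_mul_of_nonneg_right h1 (abs_nonneg _)) h2 (abs_nonneg _)
          positivity
      _ = 1 * (|w p.2| * M) := by ring
  have swap : (∫ t in Ioc α₁ α₂, ∫ u in Ioc α₁ α₂, c t u * w u * g' t)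
      = ∫ u in Ioc α₁ α₂, ∫ t in Ioc α₁ α₂, c t u * w u * g' t :=
    integral_integral_swap hint
  -- integrability of w * g
  have hwg : IntervalIntegrable (fun t => w t * g t) volume α₁ α₂ :=
    hw.mul_continuousOn (by rwa [uIcc_of_le hα])
  -- put everything together
  have lhs0 : (∫ t in Ioc α₁ α₂,
      (if t < x then ∫ u in α₁..t, w u else ∫ u in α₂..t, w u) * g' t)
      = ∫ t in Ioc α₁ α₂, (∫ u in Ioc α₁ α₂, c t u * w u) * g' t := by
    apply setIntegral_congr_fun measurableSet_Ioc
    intro t ht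
    show (if t < x then ∫ u in α₁..t, w u else ∫ u in α₂..t, w u) * g' t
      = (∫ u in Ioc α₁ α₂, c t u * w u) * g' t
    rw [keyA t ht]
  have step1 : (∫ t in Ioc α₁ α₂, (∫ u in Ioc α₁ α₂, c t u * w u) * g' t)
      = ∫ t in Ioc α₁ α₂, ∫ u in Ioc α₁ α₂, c t u * w u * g' t := by
    apply setIntegral_congr_fun measurableSet_Ioc
    intro t _
    show (∫ u in Ioc α₁ α₂, c t u * w u) * g' t = ∫ u in Ioc α₁ α₂, c t u * w u * g' t
    exact (MeasureTheory.integral_mul_const (g' t) _).symm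
  have step2 : (∫ u in Ioc α₁ α₂, ∫ t in Ioc α₁ α₂, c t u * w u * g' t)
      = ∫ u in Ioc α₁ α₂, w u * (g x - g u) := by
    apply setIntegral_congr_fun measurableSet_Ioc
    intro u hu
    show (∫ t in Ioc α₁ α₂, c t u * w u * g' t) = w u * (g x - g u)
    have e : (fun t => c t u * w u * g' t) = fun t => w u * (c t u * g' t) := by
      funext t; ring
    rw [e, MeasureTheory.integral_const_mul, keyB u hu]
  rw [intervalIntegral.integral_of_le hα, lhs0, step1, swap, step2]
  have step3 : (∫ u in Ioc α₁ α₂, w u * (g x - g u))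
      = (∫ u in Ioc α₁ α₂, w u) * g x - ∫ u in Ioc α₁ α₂, w u * g u := by
    have e : (fun u => w u * (g x - g u)) = fun u => w u * g x - w u * g u := by
      funext u; ring
    rw [e, integral_sub (hwI.mul_const (g x))
      ((intervalIntegrable_iff_integrableOn_Ioc_of_le hα).mp hwg), MeasureTheory.integral_mul_const]
  rw [step3, ← intervalIntegral.integral_of_le hα, ← intervalIntegral.integral_of_le hα]

/-- Weighted Montgomery identity. -/
lemma montgomery {α₁ α₂ : ℝ} (hα : α₁ ≤ α₂) {w g g' : ℝ → ℝ}
    (hw : IntervalIntegrable w volume α₁ α₂)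
    (hgc : ContinuousOn g (Icc α₁ α₂))
    (hg : ∀ t ∈ Ioo α₁ α₂, HasDerivAt g (g' t) t)
    (hg' : ContinuousOn g' (Icc α₁ α₂))
    {x : ℝ} (hx : x ∈ Icc α₁ α₂) :
    ∫ t in α₁..α₂, (if t < x then ∫ u in α₁..t, w u else ∫ u in α₂..t, w u) * g' t
      = (∫ u in α₁..α₂, w u) * g x - ∫ t in α₁..α₂, w t * g t := by
  have hwI : IntegrableOn w (Ioc α₁ α₂) volume :=
    (intervalIntegrable_iff_integrableOn_Ioc_of_le hα).mp hw
  obtain ⟨w', hw'm, hww'⟩ := hwI.aestronglyMeasurable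
  have hae : ∀ᵐ u ∂(volume : Measure ℝ), u ∈ Ioc α₁ α₂ → w u = w' u :=
    (ae_restrict_iff' measurableSet_Ioc).mp hww'
  -- clamp g'
  obtain ⟨M, hM⟩ := (isCompact_Icc (a := α₁) (b := α₂)).exists_bound_of_continuousOn hg'
  obtain ⟨G, hGc, hGeq, hGb⟩ : ∃ G : ℝ → ℝ, Continuous G ∧
      (∀ t ∈ Icc α₁ α₂, G t = g' t) ∧ ∀ t, ‖G t‖ ≤ M := by
    have hclamp : ∀ t : ℝ, max α₁ (min t α₂) ∈ Icc α₁ α₂ :=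
      fun t => ⟨le_max_left _ _, max_le hα (min_le_right _ _)⟩
    refine ⟨fun t => g' (max α₁ (min t α₂)),
      hg'.comp_continuous (continuous_const.max (continuous_id.min continuous_const)) hclamp,
      fun t ht => ?_, fun t => hM _ (hclamp t)⟩
    show g' (max α₁ (min t α₂)) = g' t
    rw [min_eq_left ht.2, max_eq_right ht.1]
  have hw'I : IntegrableOn w' (Ioc α₁ α₂) volume := hwI.congr hww'
  have hw' : IntervalIntegrable w' volume α₁ α₂ :=
    (intervalIntegrable_iff_integrableOn_Ioc_of_le hα).mpr hw'I
  have hg2 : ∀ t ∈ Ioo α₁ α₂, HasDerivAt g (G t) t := by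
    intro t ht
    rw [hGeq t (Ioo_subset_Icc_self ht)]
    exact hg t ht
  have key := montgomery_aux hα hw'm hw' hgc hg2 hGc hGb hx
  have e1 : (∫ u in α₁..α₂, w' u) = ∫ u in α₁..α₂, w u := by
    apply intervalIntegral.integral_congr_ae
    refine hae.mono fun u h hu => ?_
    rw [uIoc_of_le hα] at hu
    exact (h hu).symm
  have e2 : (∫ t in α₁..α₂, w' t * g t) = ∫ t in α₁..α₂, w t * g t := by
    apply intervalIntegral.integral_congr_ae
    refine hae.mono fun u h hu => ?_
    rw [uIoc_of_le hα] at hu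
    rw [h hu]
  have e0 : (∫ t in α₁..α₂, (if t < x then ∫ u in α₁..t, w' u else ∫ u in α₂..t, w' u) * G t)
      = ∫ t in α₁..α₂, (if t < x then ∫ u in α₁..t, w u else ∫ u in α₂..t, w u) * g' t := by
    apply intervalIntegral.integral_congr
    intro t ht
    rw [uIcc_of_le hα] at ht
    show (if t < x then ∫ u in α₁..t, w' u else ∫ u in α₂..t, w' u) * G t
      = (if t < x then ∫ u in α₁..t, w u else ∫ u in α₂..t, w u) * g' t
    rw [hGeq t ht]
    congr 1
    by_cases h : t < x
    · rw [if_pos h, if_pos h]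
      apply intervalIntegral.integral_congr_ae
      refine hae.mono fun u hmem hu => ?_
      rw [uIoc_of_le ht.1] at hu
      exact (hmem ⟨hu.1, le_trans hu.2 ht.2⟩).symm
    · rw [if_neg h, if_neg h]
      apply intervalIntegral.integral_congr_ae
      refine hae.mono fun u hmem hu => ?_
      rw [uIoc] at hu
      have h1 : min α₂ t = t := min_eq_right ht.2
      have h2 : max α₂ t = α₂ := max_eq_left ht.2
      rw [h1, h2] at hu
      exact (hmem ⟨lt_of_le_of_lt ht.1 hu.1, hu.2⟩).symm
  rw [e0, e1, e2] at key
  exact key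

/-- Continuity of a parametrized weighted integral. -/
lemma contParam {β₁ β₂ M : ℝ} (hβ : β₁ ≤ β₂) {w : ℝ → ℝ}
    (hw : IntervalIntegrable w volume β₁ β₂) {S : Set ℝ} {h : ℝ → ℝ → ℝ}
    (hM : ∀ t ∈ S, ∀ s ∈ Ioc β₁ β₂, ‖h t s‖ ≤ M)
    (hcs : ∀ t ∈ S, ContinuousOn (fun s => h t s) (Ioc β₁ β₂))
    (hct : ∀ s ∈ Ioc β₁ β₂, ContinuousOn (fun t => h t s) S) :
    ContinuousOn (fun t => ∫ s in β₁..β₂, w s * h t s) S := by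
  have hwI : IntegrableOn w (Ioc β₁ β₂) volume :=
    (intervalIntegrable_iff_integrableOn_Ioc_of_le hβ).mp hw
  intro t₀ ht₀
  apply intervalIntegral.continuousWithinAt_of_dominated_interval
    (bound := fun s => |w s| * M)
  · apply eventually_nhdsWithin_of_forall
    intro t ht
    rw [uIoc_of_le hβ]
    exact hwI.aestronglyMeasurable.mul
      ((hcs t ht).aestronglyMeasurable measurableSet_Ioc)
  · apply eventually_nhdsWithin_of_forall
    intro t ht
    refine Eventually.of_forall fun s hs => ?_
    rw [uIoc_of_le hβ] at hs
    rw [norm_mul, Real.norm_eq_abs]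
    exact mul_le_mul_of_nonneg_left (hM t ht s hs) (abs_nonneg _)
  · exact hw.abs.mul_const M
  · refine Eventually.of_forall fun s hs => ?_
    rw [uIoc_of_le hβ] at hs
    exact continuousWithinAt_const.mul ((hct s hs) t₀ ht₀)

/-- Continuity in the parameter of a primitive with fixed endpoints. -/
lemma contPrim {F : ℝ → ℝ → ℝ} {M : ℝ} (hF : Continuous fun p : ℝ × ℝ => F p.1 p.2)
    (hFb : ∀ t u, ‖F t u‖ ≤ M) (s y : ℝ) :
    Continuous fun t => ∫ u in s..y, F t u := by
  apply intervalIntegral.continuous_of_dominated_interval (bound := fun _ => M)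
  · intro t
    exact (hF.comp (continuous_const.prodMk continuous_id)).aestronglyMeasurable
  · intro t
    exact Eventually.of_forall fun u _ => hFb t u
  · exact intervalIntegrable_const
  · exact Eventually.of_forall fun u _ =>
      hF.comp (continuous_id.prodMk continuous_const)

/-- Continuity of `s ↦ ∫ u in s..y, g u` for continuous `g`. -/
lemma contLeft {g : ℝ → ℝ} (hg : Continuous g) (y : ℝ) :
    Continuous fun s => ∫ u in s..y, g u := by
  apply continuous_iff_continuousAt.mpr
  intro s₀
  exact (intervalIntegral.integral_hasDerivAt_left (hg.intervalIntegrable _ _)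
    (hg.stronglyMeasurableAtFilter _ _) hg.continuousAt).continuousAt

/-- Splitting a weighted integral of a difference. -/
lemma splitW {p q : ℝ} (hpq : p ≤ q) {w g : ℝ → ℝ}
    (hw : IntervalIntegrable w volume p q) (hg : ContinuousOn g (Icc p q)) (k : ℝ) :
    ∫ s in p..q, w s * (k - g s)
      = (∫ u in p..q, w u) * k - ∫ s in p..q, w s * g s := by
  have h2 : IntervalIntegrable (fun s => w s * g s) volume p q :=
    hw.mul_continuousOn (by rwa [uIcc_of_le hpq])
  have e : (fun s => w s * (k - g s)) = fun s => w s * k - w s * g s := by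
    funext s; ring
  rw [e, intervalIntegral.integral_sub (hw.mul_const k) h2,
    intervalIntegral.integral_mul_const]

end Aux

theorem weighted_ostrowski_subinterval_lemma (a b c d α₁ α₂ β₁ β₂ : ℝ)
    (ha₁ : a ≤ α₁) (hα : α₁ < α₂) (hα₂ : α₂ ≤ b)
    (hb₁ : c ≤ β₁) (hβ : β₁ < β₂) (hβ₂ : β₂ ≤ d)
    (w : ℝ → ℝ) (hw0 : ∀ u ∈ Icc a b ∪ Icc c d, 0 ≤ w u)
    (hwab : IntervalIntegrable w volume a b)
    (hwcd : IntervalIntegrable w volume c d)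
    (hmα : 0 < ∫ u in α₁..α₂, w u) (hmβ : 0 < ∫ u in β₁..β₂, w u)
    (f fx fxy : ℝ → ℝ → ℝ)
    (hfc : ContinuousOn (fun p : ℝ × ℝ => f p.1 p.2) (Icc a b ×ˢ Icc c d))
    (hfx : ∀ x ∈ Icc a b, ∀ y ∈ Icc c d, HasDerivAt (fun t => f t y) (fx x y) x)
    (hfxy : ∀ x ∈ Icc a b, ∀ y ∈ Icc c d, HasDerivAt (fun s => fx x s) (fxy x y) y)
    (hfxyc : ContinuousOn (fun p : ℝ × ℝ => fxy p.1 p.2) (Icc a b ×ˢ Icc c d)) :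
    ∀ x ∈ Icc α₁ α₂, ∀ y ∈ Icc β₁ β₂,
      f x y =
        (1 / ∫ u in α₁..α₂, w u) * (∫ t in α₁..α₂, w t * f t y) +
        (1 / ∫ u in β₁..β₂, w u) * (∫ s in β₁..β₂, w s * f x s) -
        (1 / ((∫ u in α₁..α₂, w u) * ∫ u in β₁..β₂, w u)) *
          ((∫ t in α₁..α₂, ∫ s in β₁..β₂, w t * w s * f t s) -
            ∫ t in α₁..α₂, ∫ s in β₁..β₂,
              (if t < x then ∫ u in α₁..t, w u else ∫ u in α₂..t, w u) *
                (if s < y then ∫ u in β₁..s, w u else ∫ u in β₂..s, w u) * fxy t s) := by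
  intro x hx y hy
  have hab : a ≤ b := le_trans ha₁ (le_trans hα.le hα₂)
  have hcd : c ≤ d := le_trans hb₁ (le_trans hβ.le hβ₂)
  have hsubA : Icc α₁ α₂ ⊆ Icc a b := Icc_subset_Icc ha₁ hα₂
  have hsubB : Icc β₁ β₂ ⊆ Icc c d := Icc_subset_Icc hb₁ hβ₂
  have hIocB : Ioc β₁ β₂ ⊆ Icc c d := fun s hs => hsubB ⟨hs.1.le, hs.2⟩
  have hxa : x ∈ Icc a b := hsubA hx
  have hyc : y ∈ Icc c d := hsubB hy
  have hwα : IntervalIntegrable w volume α₁ α₂ := hwab.mono_set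
    (by rw [uIcc_of_le hα.le, uIcc_of_le hab]; exact hsubA)
  have hwβ : IntervalIntegrable w volume β₁ β₂ := hwcd.mono_set
    (by rw [uIcc_of_le hβ.le, uIcc_of_le hcd]; exact hsubB)
  -- slice continuity
  have hfY : ∀ t ∈ Icc a b, ContinuousOn (fun s => f t s) (Icc c d) := by
    intro t ht
    exact hfc.comp (Continuous.continuousOn (continuous_const.prodMk continuous_id))
      (fun s hs => mk_mem_prod ht hs)
  have hfX : ∀ s ∈ Icc c d, ContinuousOn (fun t => f t s) (Icc a b) := by
    intro s hs
    exact hfc.comp (Continuous.continuousOn (continuous_id.prodMk continuous_const))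
      (fun t ht => mk_mem_prod ht hs)
  have hfxyY : ∀ t ∈ Icc a b, ContinuousOn (fun s => fxy t s) (Icc c d) := by
    intro t ht
    exact hfxyc.comp (Continuous.continuousOn (continuous_const.prodMk continuous_id))
      (fun s hs => mk_mem_prod ht hs)
  have hfxS : ∀ t ∈ Icc a b, ContinuousOn (fun s => fx t s) (Icc c d) :=
    fun t ht s hs => (hfxy t ht s hs).continuousAt.continuousWithinAt
  -- bounds
  obtain ⟨M, hM⟩ :=
    (isCompact_Icc.prod isCompact_Icc).exists_bound_of_continuousOn hfxyc
  have hM0 : 0 ≤ M :=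
    le_trans (norm_nonneg _) (hM (a, c) (mk_mem_prod ⟨le_refl a, hab⟩ ⟨le_refl c, hcd⟩))
  obtain ⟨Mf, hMf⟩ :=
    (isCompact_Icc.prod isCompact_Icc).exists_bound_of_continuousOn hfc
  -- clamped fxy
  obtain ⟨fxyC, hfxyCc, hfxyCb, hfxyCeq⟩ : ∃ fxyC : ℝ → ℝ → ℝ,
      (Continuous fun p : ℝ × ℝ => fxyC p.1 p.2) ∧ (∀ t s, ‖fxyC t s‖ ≤ M) ∧
      ∀ t ∈ Icc a b, ∀ s ∈ Icc c d, fxyC t s = fxy t s := by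
    have hclab : ∀ t : ℝ, max a (min t b) ∈ Icc a b :=
      fun t => ⟨le_max_left _ _, max_le hab (min_le_right _ _)⟩
    have hclcd : ∀ s : ℝ, max c (min s d) ∈ Icc c d :=
      fun s => ⟨le_max_left _ _, max_le hcd (min_le_right _ _)⟩
    refine ⟨fun t s => fxy (max a (min t b)) (max c (min s d)), ?_,
      fun t s => hM _ (mk_mem_prod (hclab t) (hclcd s)), fun t ht s hs => ?_⟩
    · show Continuous fun p : ℝ × ℝ => fxy (max a (min p.1 b)) (max c (min p.2 d))
      have := hfxyc.comp_continuous
        (f := fun p : ℝ × ℝ => (max a (min p.1 b), max c (min p.2 d)))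
        ((continuous_const.max (continuous_fst.min continuous_const)).prodMk
          (continuous_const.max (continuous_snd.min continuous_const)))
        (fun p => mk_mem_prod (hclab p.1) (hclcd p.2))
      exact this
    · show fxy (max a (min t b)) (max c (min s d)) = fxy t s
      rw [min_eq_left ht.2, max_eq_right ht.1, min_eq_left hs.2, max_eq_right hs.1]
  -- representation of fx differences
  have hrep : ∀ t ∈ Icc a b, ∀ s ∈ Icc c d,
      fx t y - fx t s = ∫ u in s..y, fxyC t u := by
    intro t ht s hs
    have husub : uIcc s y ⊆ Icc c d := uIcc_subset_Icc hs hyc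
    have h1 : (∫ u in s..y, fxy t u) = fx t y - fx t s := by
      apply intervalIntegral.integral_eq_sub_of_hasDerivAt
      · exact fun u hu => hfxy t ht u (husub hu)
      · exact ((hfxyY t ht).mono husub).intervalIntegrable
    have h2 : (∫ u in s..y, fxyC t u) = ∫ u in s..y, fxy t u := by
      apply intervalIntegral.integral_congr
      intro u hu
      exact hfxyCeq t ht u (husub hu)
    rw [h2, h1]
  have hrepBound : ∀ t ∈ Icc a b, ∀ s ∈ Icc c d, ‖fx t y - fx t s‖ ≤ M * (d - c) := by
    intro t ht s hs
    rw [hrep t ht s hs]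
    calc ‖∫ u in s..y, fxyC t u‖ ≤ M * |y - s| :=
          intervalIntegral.norm_integral_le_of_norm_le_const fun u _ => hfxyCb t u
      _ ≤ M * (d - c) := by
          apply mul_le_mul_of_nonneg_left _ hM0
          rw [abs_le]
          constructor <;> [linarith [hyc.1, hyc.2, hs.1, hs.2];
            linarith [hyc.1, hyc.2, hs.1, hs.2]]
  -- derivative of Ψ
  have hΨd : ∀ t₀ ∈ Ioo α₁ α₂,
      HasDerivAt (fun t => ∫ s in β₁..β₂, w s * (f t y - f t s))
        (∫ s in β₁..β₂, w s * (fx t₀ y - fx t₀ s)) t₀ := by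
    intro t₀ ht₀
    have hta : t₀ ∈ Ioo a b :=
      ⟨lt_of_le_of_lt ha₁ ht₀.1, lt_of_lt_of_le ht₀.2 hα₂⟩
    have htaI : t₀ ∈ Icc a b := ⟨hta.1.le, hta.2.le⟩
    set ε : ℝ := min (t₀ - a) (b - t₀) with hε
    have hεpos : 0 < ε := lt_min (by linarith [hta.1]) (by linarith [hta.2])
    have hball : Metric.ball t₀ ε ⊆ Icc a b := by
      intro z hz
      rw [mem_ball, Real.dist_eq, abs_lt] at hz
      constructor
      · have := min_le_left (t₀ - a) (b - t₀); rw [← hε] at this; linarith [hz.1]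
      · have := min_le_right (t₀ - a) (b - t₀); rw [← hε] at this; linarith [hz.2]
    refine (intervalIntegral.hasDerivAt_integral_of_dominated_loc_of_lip
      (F := fun t s => w s * (f t y - f t s))
      (F' := fun s => w s * (fx t₀ y - fx t₀ s))
      (bound := fun s => |w s| * (M * (d - c))) (Metric.ball_mem_nhds t₀ hεpos) ?_ ?_ ?_ ?_ ?_ ?_).2
    · have hballn : Metric.ball t₀ ε ∈ nhds t₀ := Metric.ball_mem_nhds t₀ hεpos
      refine eventually_of_mem hballn fun t htb => ?_
      rw [uIoc_of_le hβ.le]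
      have hwIβ : IntegrableOn w (Ioc β₁ β₂) volume :=
        (intervalIntegrable_iff_integrableOn_Ioc_of_le hβ.le).mp hwβ
      exact hwIβ.aestronglyMeasurable.mul
        ((continuousOn_const.sub (((hfY t (hball htb)).mono hIocB))).aestronglyMeasurable
          measurableSet_Ioc)
    · exact hwβ.mul_continuousOn (by
        rw [uIcc_of_le hβ.le]
        exact continuousOn_const.sub (((hfY t₀ htaI).mono hsubB)))
    · rw [uIoc_of_le hβ.le]
      have hwIβ : IntegrableOn w (Ioc β₁ β₂) volume :=
        (intervalIntegrable_iff_integrableOn_Ioc_of_le hβ.le).mp hwβ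
      exact hwIβ.aestronglyMeasurable.mul
        ((continuousOn_const.sub (((hfxS t₀ htaI).mono hIocB))).aestronglyMeasurable
          measurableSet_Ioc)
    · refine Eventually.of_forall fun s hs => ?_
      rw [uIoc_of_le hβ.le] at hs
      have hsc : s ∈ Icc c d := hIocB hs
      apply (convex_ball t₀ ε).lipschitzOnWith_of_nnnorm_hasDerivWithin_le
        (f' := fun t => w s * (fx t y - fx t s))
      · intro t ht
        exact (((hfx t (hball ht) y hyc).sub
          (hfx t (hball ht) s hsc)).const_mul (w s)).hasDerivWithinAt
      · intro t ht
        rw [← NNReal.coe_le_coe, coe_nnnorm, Real.coe_nnabs]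
        have h1 : ‖fx t y - fx t s‖ ≤ M * (d - c) := hrepBound t (hball ht) s hsc
        rw [Real.norm_eq_abs] at h1
        calc |w s * (fx t y - fx t s)| = |w s| * |fx t y - fx t s| := abs_mul _ _
          _ ≤ |w s| * (M * (d - c)) :=
              mul_le_mul_of_nonneg_left h1 (abs_nonneg _)
          _ ≤ |(|w s| * (M * (d - c)))| := le_abs_self _
    · exact hwβ.abs.mul_const _
    · refine Eventually.of_forall fun s hs => ?_
      rw [uIoc_of_le hβ.le] at hs
      have hsc : s ∈ Icc c d := hIocB hs
      exact ((hfx t₀ htaI y hyc).sub (hfx t₀ htaI s hsc)).const_mul (w s)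
  -- continuity of Ψ
  have hΨc : ContinuousOn (fun t => ∫ s in β₁..β₂, w s * (f t y - f t s)) (Icc α₁ α₂) := by
    refine contParam hβ.le hwβ (M := 2 * Mf)
      (S := Icc α₁ α₂) (h := fun t s => f t y - f t s) ?_ ?_ ?_
    · intro t ht s hs
      have h1 := hMf (t, y) (mk_mem_prod (hsubA ht) hyc)
      have h2 := hMf (t, s) (mk_mem_prod (hsubA ht) (hIocB hs))
      calc ‖f t y - f t s‖ ≤ ‖f t y‖ + ‖f t s‖ := norm_sub_le _ _
        _ ≤ 2 * Mf := by dsimp only at h1 h2; linarith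
    · intro t ht
      exact continuousOn_const.sub (((hfY t (hsubA ht)).mono (fun s hs => hIocB hs)))
    · intro s hs
      exact (((hfX y hyc).sub (hfX s (hIocB hs))).mono hsubA)
  -- continuity of Φ
  have hΦc : ContinuousOn (fun t => ∫ s in β₁..β₂, w s * (fx t y - fx t s)) (Icc α₁ α₂) := by
    have heq : ∀ t ∈ Icc α₁ α₂,
        (∫ s in β₁..β₂, w s * (∫ u in s..y, fxyC t u))
          = ∫ s in β₁..β₂, w s * (fx t y - fx t s) := by
      intro t ht
      apply intervalIntegral.integral_congr
      intro s hs
      rw [uIcc_of_le hβ.le] at hs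
      show w s * (∫ u in s..y, fxyC t u) = w s * (fx t y - fx t s)
      rw [hrep t (hsubA ht) s (hsubB hs)]
    have hprimc : ContinuousOn
        (fun t => ∫ s in β₁..β₂, w s * ∫ u in s..y, fxyC t u) (Icc α₁ α₂) := by
      refine contParam hβ.le hwβ (M := M * (d - c)) (S := Icc α₁ α₂)
        (h := fun t s => ∫ u in s..y, fxyC t u) ?_ ?_ ?_
      · intro t ht s hs
        calc ‖∫ u in s..y, fxyC t u‖ ≤ M * |y - s| :=
              intervalIntegral.norm_integral_le_of_norm_le_const fun u _ => hfxyCb t u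
          _ ≤ M * (d - c) := by
              apply mul_le_mul_of_nonneg_left _ hM0
              have hsc := hIocB hs
              rw [abs_le]
              constructor <;> [linarith [hyc.1, hyc.2, hsc.1, hsc.2];
                linarith [hyc.1, hyc.2, hsc.1, hsc.2]]
      · intro t ht
        apply Continuous.continuousOn
        apply contLeft (g := fun u => fxyC t u)
        exact hfxyCc.comp (continuous_const.prodMk continuous_id)
      · intro s hs
        exact (contPrim hfxyCc hfxyCb s y).continuousOn
    exact hprimc.congr (fun t ht => (heq t ht).symm)
  -- the inner Montgomery identity
  have S1 : ∀ t ∈ Icc a b,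
      (∫ s in β₁..β₂,
        (if t < x then ∫ u in α₁..t, w u else ∫ u in α₂..t, w u) *
          (if s < y then ∫ u in β₁..s, w u else ∫ u in β₂..s, w u) * fxy t s)
        = (if t < x then ∫ u in α₁..t, w u else ∫ u in α₂..t, w u) *
            ∫ s in β₁..β₂, w s * (fx t y - fx t s) := by
    intro t ht
    have e : (fun s =>
        (if t < x then ∫ u in α₁..t, w u else ∫ u in α₂..t, w u) *
          (if s < y then ∫ u in β₁..s, w u else ∫ u in β₂..s, w u) * fxy t s)
        = fun s => (if t < x then ∫ u in α₁..t, w u else ∫ u in α₂..t, w u) *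
            ((if s < y then ∫ u in β₁..s, w u else ∫ u in β₂..s, w u) * fxy t s) := by
      funext s; ring
    rw [e, intervalIntegral.integral_const_mul]
    congr 1
    have inner := montgomery hβ.le hwβ ((hfxS t ht).mono hsubB)
      (fun s hs => hfxy t ht s (hsubB (Ioo_subset_Icc_self hs)))
      ((hfxyY t ht).mono hsubB) hy
    rw [inner]
    rw [splitW hβ.le hwβ ((hfxS t ht).mono hsubB) (fx t y)]
  -- rewrite double integral D
  have S2 : (∫ t in α₁..α₂, ∫ s in β₁..β₂,
      (if t < x then ∫ u in α₁..t, w u else ∫ u in α₂..t, w u) *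
        (if s < y then ∫ u in β₁..s, w u else ∫ u in β₂..s, w u) * fxy t s)
      = ∫ t in α₁..α₂, (if t < x then ∫ u in α₁..t, w u else ∫ u in α₂..t, w u) *
          ∫ s in β₁..β₂, w s * (fx t y - fx t s) := by
    apply intervalIntegral.integral_congr
    intro t ht
    rw [uIcc_of_le hα.le] at ht
    exact S1 t (hsubA ht)
  -- main Montgomery application
  have S6 := montgomery hα.le hwα hΨc hΨd hΦc hx
  -- Ψ x
  have S7 : (∫ s in β₁..β₂, w s * (f x y - f x s))
      = (∫ u in β₁..β₂, w u) * f x y - ∫ s in β₁..β₂, w s * f x s :=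
    splitW hβ.le hwβ ((hfY x hxa).mono hsubB) (f x y)
  -- ∫ w Ψ
  have hGcont : ContinuousOn (fun t => ∫ s in β₁..β₂, w s * f t s) (Icc α₁ α₂) := by
    apply contParam hβ.le hwβ (M := Mf) (S := Icc α₁ α₂) (h := fun t s => f t s)
    · intro t ht s hs
      exact hMf (t, s) (mk_mem_prod (hsubA ht) (hIocB hs))
    · intro t ht
      exact ((hfY t (hsubA ht)).mono (fun s hs => hIocB hs))
    · intro s hs
      exact ((hfX s (hIocB hs)).mono hsubA)
  have hfyA : ContinuousOn (fun t => f t y) (Icc α₁ α₂) := (hfX y hyc).mono hsubA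
  have S8 : (∫ t in α₁..α₂, w t * ∫ s in β₁..β₂, w s * (f t y - f t s))
      = (∫ u in β₁..β₂, w u) * (∫ t in α₁..α₂, w t * f t y)
        - ∫ t in α₁..α₂, w t * ∫ s in β₁..β₂, w s * f t s := by
    have e1 : ∀ t ∈ Icc α₁ α₂,
        w t * (∫ s in β₁..β₂, w s * (f t y - f t s))
          = (∫ u in β₁..β₂, w u) * (w t * f t y)
            - w t * ∫ s in β₁..β₂, w s * f t s := by
      intro t ht
      rw [splitW hβ.le hwβ (((hfY t (hsubA ht)).mono hsubB)) (f t y)]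
      ring
    rw [intervalIntegral.integral_congr (g := fun t =>
        (∫ u in β₁..β₂, w u) * (w t * f t y) - w t * ∫ s in β₁..β₂, w s * f t s)
      (fun t ht => e1 t (by rwa [uIcc_of_le hα.le] at ht))]
    rw [intervalIntegral.integral_sub
      ((hwα.mul_continuousOn (by rwa [uIcc_of_le hα.le])).const_mul _)
      (hwα.mul_continuousOn (by rwa [uIcc_of_le hα.le]))]
    rw [intervalIntegral.integral_const_mul]
  -- C as iterated integral
  have hC : (∫ t in α₁..α₂, ∫ s in β₁..β₂, w t * w s * f t s)
      = ∫ t in α₁..α₂, w t * ∫ s in β₁..β₂, w s * f t s := by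
    apply intervalIntegral.integral_congr
    intro t _
    show (∫ s in β₁..β₂, w t * w s * f t s) = w t * ∫ s in β₁..β₂, w s * f t s
    have e : (fun s => w t * w s * f t s) = fun s => w t * (w s * f t s) := by
      funext s; ring
    rw [e, intervalIntegral.integral_const_mul]
  -- assemble
  have hD : (∫ t in α₁..α₂, ∫ s in β₁..β₂,
      (if t < x then ∫ u in α₁..t, w u else ∫ u in α₂..t, w u) *
        (if s < y then ∫ u in β₁..s, w u else ∫ u in β₂..s, w u) * fxy t s)
      = (∫ u in α₁..α₂, w u) *
          ((∫ u in β₁..β₂, w u) * f x y - ∫ s in β₁..β₂, w s * f x s)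
        - ((∫ u in β₁..β₂, w u) * (∫ t in α₁..α₂, w t * f t y)
            - ∫ t in α₁..α₂, ∫ s in β₁..β₂, w t * w s * f t s) := by
    rw [S2, S6, S7, S8, hC]
  rw [hD, hC]
  have h1 : (∫ u in α₁..α₂, w u) ≠ 0 := ne_of_gt hmα
  have h2 : (∫ u in β₁..β₂, w u) ≠ 0 := ne_of_gt hmβ
  field_simp
  ring
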